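/- Let H have vertices x_1,...,x_r and K have vertices y_1,...,y_r, with weight functions α and β of total weights A and B respectively. For any permutation σ of {1,...,r}, let G_σ be the graft product identifying x_i with y_{σ(i)} in the i-th copy of K. Then M_{G_σ}^γ = r·M_H^α + r²·M_K^β + rB·M_H^1 + (A+(r-1)B)·M_K^1. In particular, M_{G_σ}^γ does not depend on σ. -/
import Mathlib


open Finset

/-- Corollary: for the graft product `G_σ` attaching a copy of `K` at each vertex
`x_i` of `H` via the identification `x_i = y_{σ(i)}`,
`M_{G_σ}^γ = r·M_H^α + r²·M_K^β + rB·M_H^1 + (A+(r-1)B)·M_K^1`;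
in particular the moment does not depend on `σ`. -/
theorem graft_permutation_moment
    {r : ℕ} {VG : Type*} [Fintype VG]
    (H K : SimpleGraph (Fin r)) (G : SimpleGraph VG)
    (hH : H.Connected) (hK : K.Connected)
    (σ : Equiv.Perm (Fin r))
    (iH : Fin r → VG) (iK : Fin r → Fin r → VG)
    (hiH : Function.Injective iH) (hiK : ∀ i, Function.Injective (iK i))
    (hxy : ∀ i, iH i = iK i (σ i))
    (hcover : ∀ w : VG, (∃ u, w = iH u) ∨ (∃ i v, w = iK i v))
    (hdisjHK : ∀ i u v, iH u = iK i v → u = i ∧ v = σ i)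
    (hdisjKK : ∀ i j v v', i ≠ j → iK i v = iK j v' → v = σ i ∧ v' = σ j)
    (hdH : ∀ u u', G.dist (iH u) (iH u') = H.dist u u')
    (hdK : ∀ i v v', G.dist (iK i v) (iK i v') = K.dist v v')
    (hcross : ∀ i u v, G.dist (iH u) (iK i v) = H.dist u i + K.dist (σ i) v)
    (hcrossKK : ∀ i j v v', i ≠ j →
      G.dist (iK i v) (iK j v') =
        K.dist v (σ i) + H.dist i j + K.dist (σ j) v')
    (α β : Fin r → ℝ) (hα : ∀ u, 0 ≤ α u) (hβ : ∀ v, 0 ≤ β v)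
    (γ : VG → ℝ)
    (hγH : ∀ i, γ (iH i) = α i + β (σ i))
    (hγK : ∀ i v, v ≠ σ i → γ (iK i v) = β v) :
    ∑ w : VG, ∑ w' : VG, γ w' * (G.dist w w' : ℝ) =
      r * (∑ u, ∑ u', α u' * (H.dist u u' : ℝ))
      + (r : ℝ) ^ 2 * (∑ v, ∑ v', β v' * (K.dist v v' : ℝ))
      + r * (∑ v, β v) * (∑ u, ∑ u', (H.dist u u' : ℝ))
      + ((∑ u, α u) + ((r : ℝ) - 1) * (∑ v, β v))
          * (∑ v, ∑ v', (K.dist v v' : ℝ)) := by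
  classical
  -- the bijection (Fin r × Fin r) ≃ VG given by (i, v) ↦ iK i v
  have hinj : Function.Injective (fun p : Fin r × Fin r => iK p.1 p.2) := by
    rintro ⟨i, v⟩ ⟨j, v'⟩ h
    simp only at h
    by_cases hij : i = j
    · subst hij; exact Prod.ext rfl (hiK i h)
    · obtain ⟨hv, hv'⟩ := hdisjKK i j v v' hij h
      subst hv; subst hv'
      rw [← hxy, ← hxy] at h
      exact absurd (hiH h) hij
  have hsurj : Function.Surjective (fun p : Fin r × Fin r => iK p.1 p.2) := by
    intro w
    rcases hcover w with ⟨u, rfl⟩ | ⟨i, v, rfl⟩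
    · exact ⟨(u, σ u), (hxy u).symm⟩
    · exact ⟨(i, v), rfl⟩
  let e : Fin r × Fin r ≃ VG := Equiv.ofBijective _ ⟨hinj, hsurj⟩
  -- weight and distance formulas
  have hγ' : ∀ j v', γ (iK j v') = β v' + (if v' = σ j then α j else 0) := by
    intro j v'
    by_cases h : v' = σ j
    · subst h; rw [← hxy, hγH]; simp [add_comm]
    · rw [hγK j v' h]; simp [h]
  have hd' : ∀ i v j v', (G.dist (iK i v) (iK j v') : ℝ) =
      if i = j then (K.dist v v' : ℝ)
      else (K.dist v (σ i) : ℝ) + (H.dist i j : ℝ) + (K.dist (σ j) v' : ℝ) := by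
    intro i v j v'
    by_cases h : i = j
    · subst h; rw [hdK]; simp
    · rw [hcrossKK i j v v' h]; push_cast; simp [h]
  -- abbreviations
  set MK : ℝ := ∑ v, ∑ v', (K.dist v v' : ℝ) with hMK
  set MKβ : ℝ := ∑ v, ∑ v', β v' * (K.dist v v' : ℝ) with hMKβ
  set MH : ℝ := ∑ i, ∑ j, (H.dist i j : ℝ) with hMH
  set MHα : ℝ := ∑ i, ∑ j, α j * (H.dist i j : ℝ) with hMHα
  set A : ℝ := ∑ u, α u with hA
  set B : ℝ := ∑ v, β v with hB
  let s : Fin r → ℝ := fun a => ∑ v, (K.dist v a : ℝ)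
  let t : Fin r → ℝ := fun a => ∑ v', β v' * (K.dist a v' : ℝ)
  have hsK : ∑ i, s (σ i) = MK := by
    rw [Equiv.sum_comp σ s, hMK]
    exact Finset.sum_comm
  have htK : ∑ i, t (σ i) = MKβ := by
    rw [Equiv.sum_comp σ t, hMKβ]
  -- transport the big sum
  have key : ∑ w : VG, ∑ w' : VG, γ w' * (G.dist w w' : ℝ)
      = ∑ i, ∑ v, ∑ j, ∑ v',
          (β v' + (if v' = σ j then α j else 0)) *
          (if i = j then (K.dist v v' : ℝ)
           else (K.dist v (σ i) : ℝ) + (H.dist i j : ℝ) + (K.dist (σ j) v' : ℝ)) := by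
    rw [← Equiv.sum_comp e (fun w => ∑ w' : VG, γ w' * (G.dist w w' : ℝ))]
    rw [Fintype.sum_prod_type]
    refine Finset.sum_congr rfl fun i _ => Finset.sum_congr rfl fun v _ => ?_
    rw [← Equiv.sum_comp e (fun w' => γ w' * (G.dist (e (i, v)) w' : ℝ))]
    rw [Fintype.sum_prod_type]
    refine Finset.sum_congr rfl fun j _ => Finset.sum_congr rfl fun v' _ => ?_
    show γ (iK j v') * (G.dist (iK i v) (iK j v') : ℝ) = _
    rw [hγ' j v', hd' i v j v']
  rw [key]
  -- innermost sum over v'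
  have inner1 : ∀ i v j,
      (∑ v', (β v' + (if v' = σ j then α j else 0)) *
          (if i = j then (K.dist v v' : ℝ)
           else (K.dist v (σ i) : ℝ) + (H.dist i j : ℝ) + (K.dist (σ j) v' : ℝ)))
      = if i = j then (∑ v', β v' * (K.dist v v' : ℝ)) + α j * (K.dist v (σ j) : ℝ)
        else (B + α j) * ((K.dist v (σ i) : ℝ) + (H.dist i j : ℝ)) + t (σ j) := by
    intro i v j
    by_cases h : i = j
    · simp only [h, if_true]
      have hrw : ∀ v', (β v' + (if v' = σ j then α j else 0)) * (K.dist v v' : ℝ)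
          = β v' * (K.dist v v' : ℝ) + (if v' = σ j then α j * (K.dist v v' : ℝ) else 0) := by
        intro v'; split <;> ring
      rw [Finset.sum_congr rfl fun v' _ => hrw v', Finset.sum_add_distrib,
        Finset.sum_ite_eq' univ (σ j) (fun v' => α j * (K.dist v v' : ℝ))]
      simp
    · simp only [h, if_false]
      have hrw : ∀ v', (β v' + (if v' = σ j then α j else 0)) *
            ((K.dist v (σ i) : ℝ) + (H.dist i j : ℝ) + (K.dist (σ j) v' : ℝ))
          = β v' * ((K.dist v (σ i) : ℝ) + (H.dist i j : ℝ)) + β v' * (K.dist (σ j) v' : ℝ)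
            + (if v' = σ j then α j * ((K.dist v (σ i) : ℝ) + (H.dist i j : ℝ) + (K.dist (σ j) v' : ℝ)) else 0) := by
        intro v'; split <;> ring
      rw [Finset.sum_congr rfl fun v' _ => hrw v', Finset.sum_add_distrib, Finset.sum_add_distrib,
        Finset.sum_ite_eq' univ (σ j)
          (fun v' => α j * ((K.dist v (σ i) : ℝ) + (H.dist i j : ℝ) + (K.dist (σ j) v' : ℝ))),
        ← Finset.sum_mul]
      simp [t, SimpleGraph.dist_self]
      ring
  -- sum over j: split diagonal
  have sum_if : ∀ (i : Fin r) (F Gf : Fin r → ℝ),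
      (∑ j, (if i = j then F j else Gf j)) = F i - Gf i + ∑ j, Gf j := by
    intro i F Gf
    have hrw : ∀ j, (if i = j then F j else Gf j)
        = (if i = j then F j - Gf j else 0) + Gf j := by
      intro j; split <;> ring
    rw [Finset.sum_congr rfl fun j _ => hrw j, Finset.sum_add_distrib,
      Finset.sum_ite_eq univ i (fun j => F j - Gf j)]
    simp
  have inner2 : ∀ i v,
      (∑ j, ∑ v', (β v' + (if v' = σ j then α j else 0)) *
          (if i = j then (K.dist v v' : ℝ)
           else (K.dist v (σ i) : ℝ) + (H.dist i j : ℝ) + (K.dist (σ j) v' : ℝ)))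
      = (∑ v', β v' * (K.dist v v' : ℝ))
        + (A + ((r : ℝ) - 1) * B) * (K.dist v (σ i) : ℝ)
        + (B * (∑ j, (H.dist i j : ℝ)) + (∑ j, α j * (H.dist i j : ℝ)) + MKβ - t (σ i)) := by
    intro i v
    rw [Finset.sum_congr rfl fun j _ => inner1 i v j, sum_if]
    have e1 : ∑ j, ((B + α j) * ((K.dist v (σ i) : ℝ) + (H.dist i j : ℝ)) + t (σ j))
        = ((r : ℝ) * B + A) * (K.dist v (σ i) : ℝ)
          + (B * (∑ j, (H.dist i j : ℝ)) + (∑ j, α j * (H.dist i j : ℝ))) + MKβ := by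
      have hrw : ∀ j, (B + α j) * ((K.dist v (σ i) : ℝ) + (H.dist i j : ℝ)) + t (σ j)
          = (B * (K.dist v (σ i) : ℝ) + α j * (K.dist v (σ i) : ℝ))
            + (B * (H.dist i j : ℝ) + α j * (H.dist i j : ℝ)) + t (σ j) := by
        intro j; ring
      rw [Finset.sum_congr rfl fun j _ => hrw j]
      simp only [Finset.sum_add_distrib, htK, ← Finset.sum_mul, ← Finset.mul_sum,
        Finset.sum_const, card_univ, Fintype.card_fin, nsmul_eq_mul]
      rw [hA]
      ring
    rw [e1, SimpleGraph.dist_self]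
    push_cast
    ring
  rw [Finset.sum_congr rfl fun i _ => Finset.sum_congr rfl fun v _ => inner2 i v]
  have inner3 : ∀ i,
      (∑ v, ((∑ v', β v' * (K.dist v v' : ℝ))
        + (A + ((r : ℝ) - 1) * B) * (K.dist v (σ i) : ℝ)
        + (B * (∑ j, (H.dist i j : ℝ)) + (∑ j, α j * (H.dist i j : ℝ)) + MKβ - t (σ i))))
      = MKβ + (A + ((r : ℝ) - 1) * B) * s (σ i)
        + (r : ℝ) * (B * (∑ j, (H.dist i j : ℝ)) + (∑ j, α j * (H.dist i j : ℝ)) + MKβ - t (σ i)) := by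
    intro i
    rw [Finset.sum_add_distrib, Finset.sum_add_distrib, ← Finset.mul_sum,
      Finset.sum_const, card_univ, Fintype.card_fin, nsmul_eq_mul, hMKβ]
  rw [Finset.sum_congr rfl fun i _ => inner3 i]
  rw [Finset.sum_add_distrib, Finset.sum_add_distrib, ← Finset.mul_sum, hsK,
    Finset.sum_const, card_univ, Fintype.card_fin, nsmul_eq_mul, ← Finset.mul_sum]
  have e2 : ∑ i, (B * (∑ j, (H.dist i j : ℝ)) + (∑ j, α j * (H.dist i j : ℝ)) + MKβ - t (σ i))
      = B * MH + MHα + (r : ℝ) * MKβ - MKβ := by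
    have hrw : ∀ i, (B * (∑ j, (H.dist i j : ℝ)) + (∑ j, α j * (H.dist i j : ℝ)) + MKβ - t (σ i))
        = B * (∑ j, (H.dist i j : ℝ)) + ((∑ j, α j * (H.dist i j : ℝ)) + (MKβ - t (σ i))) := by
      intro i; ring
    rw [Finset.sum_congr rfl fun i _ => hrw i, Finset.sum_add_distrib, Finset.sum_add_distrib,
      ← Finset.mul_sum, Finset.sum_sub_distrib, htK, Finset.sum_const, card_univ,
      Fintype.card_fin, nsmul_eq_mul, hMH, hMHα]
    ring
  rw [e2]
  ring
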